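/- Define F_{m,k}(x_1,...,x_m) = ∑ x_{i_1}···x_{i_ℓ} over all sequences (i_1,...,i_ℓ) ∈ {1,...,m}^ℓ (ℓ ≥ 0) with no k consecutive strictly decreasing entries. Then F_{m,k} is a symmetric formal power series: it is invariant under every permutation of the variables x_1,...,x_m. -/

import Mathlib

/-- `l` has a strictly decreasing run of length `k` starting at position `i`. -/
def HasStrictDecRunAt (k : ℕ) (l : List ℕ) (i : ℕ) : Prop :=
  i + k ≤ l.length ∧ ∀ j, j + 1 < k → l.getD (i + j + 1) 0 < l.getD (i + j) 0

/-- A sequence is `k`-admissible if no `k` consecutive entries are strictly decreasing. -/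
def Admissible (k : ℕ) (l : List ℕ) : Prop := ∀ i, ¬ HasStrictDecRunAt k l i

/-- The generating function `F_{m,k} = ∑ x_{i_1} ⋯ x_{i_ℓ}` over admissible sequences
over `{1,…,m}`, as a formal power series in `x_1,…,x_m`. -/
noncomputable def admGenFun (m k : ℕ) : MvPowerSeries (Fin m) ℤ := fun d =>
  (Nat.card {l : List ℕ // (∀ x ∈ l, 1 ≤ x ∧ x ≤ m) ∧ Admissible k l ∧
    ∀ i : Fin m, l.count (i.1 + 1) = d i} : ℤ)

open List

namespace AdmAux


def sortKey (g : ℕ → ℕ) (l : List ℕ) : List ℕ := (l.map g).insertionSort (· ≤ ·)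
lemma sortKey_length (g : ℕ → ℕ) (l : List ℕ) : (sortKey g l).length = l.length :=
  ((List.perm_insertionSort _ _).length_eq).trans (l.length_map g)
def chopF (g : ℕ → ℕ) : List ℕ → List ℕ → List ℕ
  | [], l => sortKey g l
  | s :: ss, l => sortKey g (l.take (s+1)) ++ chopF g (ss.map (· - (s+1))) (l.drop (s+1))
  termination_by ss _ => ss.length
  decreasing_by simp

lemma chopF_length (g : ℕ → ℕ) : ∀ (ss l : List ℕ), (chopF g ss l).length = l.length
  | [], l => by simp [chopF, sortKey_length]
  | s :: ss, l => by
      rw [chopF, List.length_append, sortKey_length, chopF_length g _ _,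
        List.length_take, List.length_drop]
      omega
  termination_by ss _ => ss.length
  decreasing_by simp

lemma chopF_perm (g : ℕ → ℕ) : ∀ (ss l : List ℕ), chopF g ss l ~ l.map g
  | [], l => by rw [chopF]; exact List.perm_insertionSort _ _
  | s :: ss, l => by
      rw [chopF]
      calc sortKey g (l.take (s+1)) ++ chopF g (ss.map (· - (s+1))) (l.drop (s+1))
          ~ (l.take (s+1)).map g ++ (l.drop (s+1)).map g :=
            (List.perm_insertionSort _ _).append (chopF_perm g _ _)
        _ = l.map g := by rw [← List.map_append, List.take_append_drop]
  termination_by ss _ => ss.length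
  decreasing_by simp

lemma chopF_nil (g : ℕ → ℕ) : ∀ (ss : List ℕ), chopF g ss [] = []
  | [] => by simp [chopF, sortKey]
  | s :: ss => by
      rw [chopF]
      simp only [List.take_nil, List.drop_nil]
      rw [chopF_nil g (ss.map (· - (s+1)))]
      simp [sortKey]
  termination_by ss => ss.length
  decreasing_by simp


def ND (ss : List ℕ) (l : List ℕ) : Prop :=
  ∀ j, j + 1 < l.length → j ∉ ss → l.getD j 0 ≤ l.getD (j+1) 0

lemma sorted_adj {l : List ℕ} (h : l.Pairwise (· ≤ ·)) {j : ℕ} (hj : j + 1 < l.length) :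
    l.getD j 0 ≤ l.getD (j+1) 0 := by
  rw [l.getD_eq_getElem 0 (by omega), l.getD_eq_getElem 0 hj]
  exact List.pairwise_iff_getElem.1 h j (j+1) (by omega) hj (by omega)

lemma ND_nil_sorted {l : List ℕ} (h : ND [] l) : l.Pairwise (· ≤ ·) := by
  rw [← List.isChain_iff_pairwise, List.isChain_iff_getElem]
  intro i hi
  have := h i (by omega) (by simp)
  rwa [l.getD_eq_getElem 0 (by omega), l.getD_eq_getElem 0 (by omega)] at this

lemma sortKey_sortKey {g g' : ℕ → ℕ} {b : List ℕ} (hg : ∀ x ∈ b, g' (g x) = x)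
    (hb : b.Pairwise (· ≤ ·)) : sortKey g' (sortKey g b) = b := by
  apply List.Perm.eq_of_pairwise' (List.pairwise_insertionSort _ _) hb
  calc sortKey g' (sortKey g b) ~ (sortKey g b).map g' := List.perm_insertionSort _ _
    _ ~ (b.map g).map g' := ((List.perm_insertionSort _ _).map g')
    _ = b := by rw [List.map_map]; exact List.map_congr_left (by simpa using hg) |>.trans b.map_id

lemma ND_sorted_take {s : ℕ} {ss l : List ℕ} (h : ND (s :: ss) l)
    (hss : (s :: ss).Pairwise (· < ·)) : (l.take (s+1)).Pairwise (· ≤ ·) := by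
  rw [← List.isChain_iff_pairwise, List.isChain_iff_getElem]
  intro i hi
  have hlen : (l.take (s+1)).length = min (s+1) l.length := List.length_take
  have hilt : i < s := by omega
  have hmem : i ∉ s :: ss := by
    intro hmem
    rcases List.mem_cons.1 hmem with h' | h'
    · omega
    · exact absurd (List.rel_of_pairwise_cons hss h') (by omega)
  have := h i (by omega) hmem
  rw [l.getD_eq_getElem 0 (by omega), l.getD_eq_getElem 0 (by omega)] at this
  simpa [List.getElem_take] using this

lemma getD_drop' (l : List ℕ) (i j : ℕ) (h : j < (l.drop i).length) :
    (l.drop i).getD j 0 = l.getD (i+j) 0 := by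
  rw [List.getD_eq_getElem _ _ h, List.getD_eq_getElem _ _ (by simp at h ⊢; omega)]
  exact List.getElem_drop


lemma ND_drop {s : ℕ} {ss l : List ℕ} (h : ND (s :: ss) l) :
    ND (ss.map (· - (s+1))) (l.drop (s+1)) := by
  intro j hj hjm
  have hlen : (l.drop (s+1)).length = l.length - (s+1) := List.length_drop
  have hmem : (j + (s+1)) ∉ s :: ss := by
    intro hmem
    rcases List.mem_cons.1 hmem with h' | h'
    · omega
    · exact hjm (by simpa using List.mem_map_of_mem (f := (· - (s+1))) h')
  have h2 := h (j + (s+1)) (by omega) hmem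
  rw [getD_drop' l (s+1) j (by omega), getD_drop' l (s+1) (j+1) (by omega),
    show s+1+j = j+(s+1) by omega, show s+1+(j+1) = j+(s+1)+1 by omega]
  exact h2


lemma sortKey_sorted (g : ℕ → ℕ) (l : List ℕ) : (sortKey g l).Pairwise (· ≤ ·) :=
  List.pairwise_insertionSort _ _

lemma sorted_map_sub {s : ℕ} {ss : List ℕ} (h : (s::ss).Pairwise (· < ·)) :
    (ss.map (· - (s+1))).Pairwise (· < ·) := by
  have hmem : ∀ x ∈ ss, s < x := fun x hx => List.rel_of_pairwise_cons h hx
  rw [ List.pairwise_map]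
  exact (List.pairwise_cons.1 h).2.imp_of_mem
    (fun {a b} ha hb hab => by have := hmem _ ha; have := hmem _ hb; omega)

lemma ND_chopF (g : ℕ → ℕ) : ∀ (ss l : List ℕ), ss.Pairwise (· < ·) → ND ss (chopF g ss l)
  | [], l => by
      intro _ j hj _
      rw [chopF] at hj ⊢
      exact sorted_adj (sortKey_sorted g l) hj
  | s :: ss, l => by
      intro hss j hj hjm
      have hbl : (sortKey g (l.take (s+1))).length = min (s+1) l.length := by
        rw [sortKey_length, List.length_take]
      rw [chopF_length] at hj
      rw [chopF]
      by_cases hcase : j + 1 < (sortKey g (l.take (s+1))).length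
      · rw [List.getD_append _ _ _ _ (by omega), List.getD_append _ _ _ _ hcase]
        exact sorted_adj (sortKey_sorted g _) hcase
      · have hs1 : s + 1 ≤ l.length := by omega
        have hjs : j ≠ s := fun h' => hjm (h' ▸ List.mem_cons_self)
        have hjb : (sortKey g (l.take (s+1))).length ≤ j := by omega
        rw [List.getD_append_right _ _ _ j hjb,
          List.getD_append_right _ _ _ (j+1) (by omega)]
        have hIH := ND_chopF g (ss.map (· - (s+1))) (l.drop (s+1)) (sorted_map_sub hss)
        have hmem2 : j - (sortKey g (l.take (s+1))).length ∉ ss.map (· - (s+1)) := by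
          intro hmem2
          rcases List.mem_map.1 hmem2 with ⟨t, ht, hteq⟩
          have h1 := List.rel_of_pairwise_cons hss ht
          have h2 : t = j := by omega
          exact hjm (List.mem_cons_of_mem _ (h2 ▸ ht))
        have hfin := hIH (j - (sortKey g (l.take (s+1))).length)
          (by rw [chopF_length, List.length_drop]; omega) hmem2
        rwa [show j + 1 - (sortKey g (l.take (s+1))).length
            = (j - (sortKey g (l.take (s+1))).length) + 1 by omega]
  termination_by ss _ => ss.length
  decreasing_by simp

lemma chopF_chopF (g g' : ℕ → ℕ) : ∀ (ss l : List ℕ), ss.Pairwise (· < ·) → ND ss l →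
    (∀ x ∈ l, g' (g x) = x) → chopF g' ss (chopF g ss l) = l
  | [], l => by
      intro _ hnd hg
      rw [chopF, chopF]
      exact sortKey_sortKey hg (ND_nil_sorted hnd)
  | s :: ss, l => by
      intro hss hnd hg
      have hbsorted : (l.take (s+1)).Pairwise (· ≤ ·) := ND_sorted_take hnd hss
      have hgb : ∀ x ∈ l.take (s+1), g' (g x) = x := fun x hx => hg x (List.mem_of_mem_take hx)
      rcases le_or_gt (l.length) (s+1) with hle | hlt
      · have hdrop : l.drop (s+1) = [] := List.drop_eq_nil_of_le hle
        have htake : l.take (s+1) = l := List.take_of_length_le (by omega)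
        have hsl : (sortKey g (l.take (s+1))).length ≤ s + 1 := by
          rw [sortKey_length, htake]; exact hle
        rw [chopF, chopF, hdrop, chopF_nil, List.append_nil,
          List.take_of_length_le hsl, List.drop_eq_nil_of_le hsl, chopF_nil, List.append_nil,
          htake]
        rw [htake] at hbsorted hgb
        exact sortKey_sortKey hgb hbsorted
      · have hblen : (sortKey g (l.take (s+1))).length = s+1 := by
          rw [sortKey_length, List.length_take]; omega
        rw [chopF, chopF, List.take_left' hblen, List.drop_left' hblen,
          sortKey_sortKey hgb hbsorted,
          chopF_chopF g g' _ _ (sorted_map_sub hss) (ND_drop hnd)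
            (fun x hx => hg x (List.mem_of_mem_drop hx)),
          List.take_append_drop]
  termination_by ss _ => ss.length
  decreasing_by simp



/-- action of a permutation on letters 1..m -/
def pact (m : ℕ) (σ : Equiv.Perm (Fin m)) (x : ℕ) : ℕ :=
  if h : x - 1 < m ∧ 1 ≤ x then ((σ ⟨x-1, h.1⟩ : Fin m) : ℕ) + 1 else x

lemma pact_valid {m : ℕ} (σ : Equiv.Perm (Fin m)) {x : ℕ} (h1 : 1 ≤ x) (h2 : x ≤ m) :
    1 ≤ pact m σ x ∧ pact m σ x ≤ m := by
  rw [pact, dif_pos ⟨by omega, h1⟩]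
  have := (σ ⟨x-1, by omega⟩).2
  omega

lemma pact_pact {m : ℕ} (σ : Equiv.Perm (Fin m)) (x : ℕ) : pact m σ⁻¹ (pact m σ x) = x := by
  simp only [pact]
  by_cases h : x - 1 < m ∧ 1 ≤ x
  · simp only [dif_pos h]
    have h2 := (σ ⟨x-1, h.1⟩).2
    rw [dif_pos (⟨by omega, by omega⟩ : (σ ⟨x-1, h.1⟩ : ℕ) + 1 - 1 < m ∧ 1 ≤ (σ ⟨x-1, h.1⟩ : ℕ) + 1)]
    have e : (⟨(σ ⟨x-1, h.1⟩ : ℕ) + 1 - 1, by omega⟩ : Fin m) = σ ⟨x-1, h.1⟩ := by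
      apply Fin.ext; simp
    rw [e]
    simp only [Equiv.Perm.inv_def, Equiv.symm_apply_apply]
    omega
  · simp only [dif_neg h]

lemma pact_pact' {m : ℕ} (σ : Equiv.Perm (Fin m)) (x : ℕ) : pact m σ (pact m σ⁻¹ x) = x := by
  simpa using pact_pact σ⁻¹ x

lemma pact_inj {m : ℕ} (σ : Equiv.Perm (Fin m)) : Function.Injective (pact m σ) :=
  Function.LeftInverse.injective (pact_pact σ)

lemma count_map_pact {m : ℕ} (σ : Equiv.Perm (Fin m)) (l : List ℕ) (i : Fin m) :
    (l.map (pact m σ)).count (i.1 + 1) = l.count ((σ⁻¹ i : Fin m).1 + 1) := by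
  have : (i.1 : ℕ) + 1 = pact m σ ((σ⁻¹ i : Fin m).1 + 1) := by
    simp only [pact]
    rw [dif_pos ⟨by simp, by omega⟩]
    congr 1
    have : (⟨(σ⁻¹ i : Fin m).1 + 1 - 1, by simp⟩ : Fin m) = σ⁻¹ i := by apply Fin.ext; simp
    rw [this]; simp
  rw [this, List.count_map_of_injective _ _ (pact_inj σ)]



lemma length_eq_sum_count {m : ℕ} {l : List ℕ} (hv : ∀ x ∈ l, 1 ≤ x ∧ x ≤ m) :
    l.length = ∑ i : Fin m, l.count (i.1 + 1) := by
  induction l with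
  | nil => simp
  | cons a t ih =>
    have hv' : ∀ x ∈ t, 1 ≤ x ∧ x ≤ m := fun x hx => hv x (List.mem_cons_of_mem _ hx)
    have ha := hv a (List.mem_cons_self)
    have key : ∑ i : Fin m, (a :: t).count (i.1+1)
        = (∑ i : Fin m, t.count (i.1+1)) + 1 := by
      have : ∀ i : Fin m, (a :: t).count (i.1+1)
          = t.count (i.1+1) + (if a = i.1 + 1 then 1 else 0) := by
        intro i
        rw [List.count_cons]
        simp only [beq_iff_eq]
      rw [Finset.sum_congr rfl (fun i _ => this i), Finset.sum_add_distrib]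
      congr 1
      rw [Finset.sum_eq_single (⟨a - 1, by omega⟩ : Fin m)]
      · rw [if_pos (by simp; omega)]
      · intro b _ hb
        rw [if_neg]
        intro hba
        exact hb (Fin.ext (show b.1 = a - 1 by omega))
      · intro h; exact absurd (Finset.mem_univ _) h
    rw [List.length_cons, key, ih hv']

lemma finite_master (m : ℕ) (d : Fin m →₀ ℕ) (Q : List ℕ → Prop)
    (hQ : ∀ l, Q l → (∀ x ∈ l, 1 ≤ x ∧ x ≤ m) ∧ ∀ i : Fin m, l.count (i.1+1) = d i) :
    Finite {l : List ℕ // Q l} := by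
  set n := ∑ i : Fin m, d i with hn
  have hlen : ∀ l : {l : List ℕ // Q l}, l.1.length = n := by
    intro l
    rw [length_eq_sum_count (hQ l.1 l.2).1, hn]
    exact Finset.sum_congr rfl (fun i _ => (hQ l.1 l.2).2 i)
  apply Finite.of_injective (β := Fin n → Fin (m+1))
    (fun l j => ⟨l.1.getD j.1 0, by
      by_cases hj : j.1 < l.1.length
      · have e := l.1.getD_eq_getElem 0 hj
        have := (hQ l.1 l.2).1 _ (List.getElem_mem hj)
        omega
      · rw [List.getD_eq_default _ _ (by omega)]; omega⟩)
  intro a b hab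
  apply Subtype.ext
  apply List.ext_getElem ((hlen a).trans (hlen b).symm)
  intro j h1 h2
  have hj : j < n := by rw [← hlen a]; exact h1
  have := congrFun hab ⟨j, hj⟩
  simp only [Fin.mk.injEq] at this
  rwa [List.getD_eq_getElem _ _ h1, List.getD_eq_getElem _ _ h2] at this

lemma natCard_sigma {ι : Type*} [Fintype ι] (f : ι → Type*) [∀ i, Finite (f i)] :
    Nat.card (Σ i, f i) = ∑ i, Nat.card (f i) := by
  letI : ∀ i, Fintype (f i) := fun i => Fintype.ofFinite _
  simp only [Nat.card_eq_fintype_card]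
  exact Fintype.card_sigma



def DesSet (l : List ℕ) : Finset ℕ :=
  (Finset.range (l.length - 1)).filter (fun j => l.getD (j+1) 0 < l.getD j 0)

lemma mem_DesSet {l : List ℕ} {j : ℕ} :
    j ∈ DesSet l ↔ j + 1 < l.length ∧ l.getD (j+1) 0 < l.getD j 0 := by
  simp only [DesSet, Finset.mem_filter, Finset.mem_range]
  constructor
  · rintro ⟨h1, h2⟩; exact ⟨by omega, h2⟩
  · rintro ⟨h1, h2⟩; exact ⟨by omega, h2⟩

lemma desSet_subset_iff_ND {T : Finset ℕ} {l : List ℕ} :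
    DesSet l ⊆ T ↔ ND (T.sort (· ≤ ·)) l := by
  constructor
  · intro h j h1 hj
    by_contra hle
    exact hj (Finset.mem_sort _ |>.2 (h (mem_DesSet.2 ⟨h1, by omega⟩)))
  · intro h j hj
    rw [mem_DesSet] at hj
    by_contra hT
    have := h j hj.1 (fun hmem => hT (Finset.mem_sort _ |>.1 hmem))
    omega

lemma desSet_subset_range {l : List ℕ} : DesSet l ⊆ Finset.range (l.length - 1) :=
  Finset.filter_subset _ _

variable {m : ℕ}

def Vld (m : ℕ) (l : List ℕ) : Prop := ∀ x ∈ l, 1 ≤ x ∧ x ≤ m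
def Cnt (m : ℕ) (d : Fin m →₀ ℕ) (l : List ℕ) : Prop := ∀ i : Fin m, l.count (i.1 + 1) = d i

instance instF1 (d : Fin m →₀ ℕ) (T : Finset ℕ) :
    Finite {l : List ℕ // Vld m l ∧ DesSet l ⊆ T ∧ Cnt m d l} :=
  finite_master m d _ (fun _ h => ⟨h.1, h.2.2⟩)
instance instF2 (d : Fin m →₀ ℕ) (T : Finset ℕ) :
    Finite {l : List ℕ // Vld m l ∧ DesSet l = T ∧ Cnt m d l} :=
  finite_master m d _ (fun _ h => ⟨h.1, h.2.2⟩)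
instance instF3 (d : Fin m →₀ ℕ) (k : ℕ) :
    Finite {l : List ℕ // Vld m l ∧ Admissible k l ∧ Cnt m d l} :=
  finite_master m d _ (fun _ h => ⟨h.1, h.2.2⟩)
instance instF4 (d : Fin m →₀ ℕ) (k : ℕ) (T : Finset ℕ) :
    Finite {l : List ℕ // Vld m l ∧ Admissible k l ∧ DesSet l = T ∧ Cnt m d l} :=
  finite_master m d _ (fun _ h => ⟨h.1, h.2.2.2⟩)

noncomputable def cN (m : ℕ) (d : Fin m →₀ ℕ) (T : Finset ℕ) : ℕ :=
  Nat.card {l : List ℕ // Vld m l ∧ DesSet l ⊆ T ∧ Cnt m d l}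
noncomputable def cE (m : ℕ) (d : Fin m →₀ ℕ) (T : Finset ℕ) : ℕ :=
  Nat.card {l : List ℕ // Vld m l ∧ DesSet l = T ∧ Cnt m d l}

lemma cN_perm (σ : Equiv.Perm (Fin m)) (d : Fin m →₀ ℕ) (T : Finset ℕ) :
    cN m (Finsupp.equivMapDomain σ d) T = cN m d T := by
  have hss : (T.sort (· ≤ ·)).Pairwise (· < ·) := (Finset.sortedLT_sort T).pairwise
  refine Nat.card_congr ?_
  refine ⟨fun l => ⟨chopF (pact m σ⁻¹) (T.sort (· ≤ ·)) l.1, ?_, ?_, ?_⟩,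
    fun l => ⟨chopF (pact m σ) (T.sort (· ≤ ·)) l.1, ?_, ?_, ?_⟩, ?_, ?_⟩
  · intro x hx
    rcases List.mem_map.1 ((chopF_perm _ _ _).subset hx) with ⟨y, hy, rfl⟩
    exact pact_valid σ⁻¹ (l.2.1 y hy).1 (l.2.1 y hy).2
  · exact desSet_subset_iff_ND.2 (ND_chopF _ _ _ hss)
  · intro i
    rw [(chopF_perm _ _ _).count_eq, count_map_pact σ⁻¹ l.1 i, l.2.2.2 (σ⁻¹⁻¹ i)]
    simp only [inv_inv]
    rw [Finsupp.equivMapDomain_apply]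
    simp
  · intro x hx
    rcases List.mem_map.1 ((chopF_perm _ _ _).subset hx) with ⟨y, hy, rfl⟩
    exact pact_valid σ (l.2.1 y hy).1 (l.2.1 y hy).2
  · exact desSet_subset_iff_ND.2 (ND_chopF _ _ _ hss)
  · intro i
    rw [(chopF_perm _ _ _).count_eq, count_map_pact σ l.1 i, l.2.2.2 (σ⁻¹ i),
      Finsupp.equivMapDomain_apply]
    rfl
  · intro l
    apply Subtype.ext
    exact chopF_chopF (pact m σ⁻¹) (pact m σ) _ l.1 hss
      (desSet_subset_iff_ND.1 l.2.2.1) (fun x _ => pact_pact' σ x)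
  · intro l
    apply Subtype.ext
    exact chopF_chopF (pact m σ) (pact m σ⁻¹) _ l.1 hss
      (desSet_subset_iff_ND.1 l.2.2.1) (fun x _ => pact_pact σ x)

lemma cN_eq_sum (d : Fin m →₀ ℕ) (T : Finset ℕ) :
    cN m d T = ∑ T' ∈ T.powerset, cE m d T' := by
  classical
  rw [cN]
  have e1 : {l : List ℕ // Vld m l ∧ DesSet l ⊆ T ∧ Cnt m d l}
      ≃ Σ T' : T.powerset, {l : List ℕ // Vld m l ∧ DesSet l = T'.1 ∧ Cnt m d l} := by
    refine (Equiv.sigmaFiberEquiv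
      (fun l : {l : List ℕ // Vld m l ∧ DesSet l ⊆ T ∧ Cnt m d l} =>
        (⟨DesSet l.1, Finset.mem_powerset.2 l.2.2.1⟩ : T.powerset))).symm.trans
      (Equiv.sigmaCongrRight (fun T' => ?_))
    exact ⟨fun x => ⟨x.1.1, x.1.2.1, congrArg Subtype.val x.2, x.1.2.2.2⟩,
      fun l => ⟨⟨l.1, l.2.1, by rw [l.2.2.1]; exact Finset.mem_powerset.1 T'.2, l.2.2.2⟩,
        Subtype.ext l.2.2.1⟩,
      fun x => rfl, fun l => rfl⟩
  rw [Nat.card_congr e1, natCard_sigma]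
  exact Finset.sum_coe_sort T.powerset (fun T' => cE m d T')

lemma cE_perm (σ : Equiv.Perm (Fin m)) (d : Fin m →₀ ℕ) (T : Finset ℕ) :
    cE m (Finsupp.equivMapDomain σ d) T = cE m d T := by
  classical
  induction T using Finset.strongInduction with
  | _ T ih =>
    have h1 := cN_eq_sum (Finsupp.equivMapDomain σ d) T
    have h2 := cN_eq_sum d T
    rw [cN_perm σ d T] at h1
    have h3 : ∑ T' ∈ T.powerset, cE m (Finsupp.equivMapDomain σ d) T'
        = ∑ T' ∈ T.powerset, cE m d T' := h1.symm.trans h2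
    have hTmem : T ∈ T.powerset := Finset.mem_powerset_self T
    rw [← Finset.add_sum_erase _ _ hTmem, ← Finset.add_sum_erase _ _ hTmem] at h3
    have h4 : ∑ T' ∈ T.powerset.erase T, cE m (Finsupp.equivMapDomain σ d) T'
        = ∑ T' ∈ T.powerset.erase T, cE m d T' := by
      apply Finset.sum_congr rfl
      intro T' hT'
      rcases Finset.mem_erase.1 hT' with ⟨hne, hmem⟩
      exact ih T' (lt_of_le_of_ne (Finset.mem_powerset.1 hmem) hne)
    omega

def AdmP (k n : ℕ) (T : Finset ℕ) : Prop :=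
  ∀ i, ¬ (i + k ≤ n ∧ ∀ j, j + 1 < k → i + j ∈ T)

lemma adm_iff {k n : ℕ} {l : List ℕ} (hl : l.length = n) :
    Admissible k l ↔ AdmP k n (DesSet l) := by
  constructor
  · intro h i hc
    exact h i ⟨by omega, fun j hj => (mem_DesSet.1 (hc.2 j hj)).2⟩
  · intro h i hc
    rcases hc with ⟨hc1, hc2⟩
    exact h i ⟨by omega, fun j hj => mem_DesSet.2 ⟨by omega, hc2 j hj⟩⟩

open scoped Classical in
lemma final_count (d : Fin m →₀ ℕ) (n : ℕ) (hn : ∑ i : Fin m, d i = n) (k : ℕ) :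
    Nat.card {l : List ℕ // Vld m l ∧ Admissible k l ∧ Cnt m d l}
      = ∑ T ∈ (Finset.range (n-1)).powerset, (if AdmP k n T then cE m d T else 0) := by
  classical
  have hlen : ∀ l : List ℕ, Vld m l → Cnt m d l → l.length = n := fun l hv hc => by
    rw [length_eq_sum_count hv, ← hn]
    exact Finset.sum_congr rfl fun i _ => hc i
  have e1 : {l : List ℕ // Vld m l ∧ Admissible k l ∧ Cnt m d l}
      ≃ Σ T : (Finset.range (n-1)).powerset,
        {l : List ℕ // Vld m l ∧ Admissible k l ∧ DesSet l = T.1 ∧ Cnt m d l} := by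
    refine (Equiv.sigmaFiberEquiv
      (fun l : {l : List ℕ // Vld m l ∧ Admissible k l ∧ Cnt m d l} =>
        (⟨DesSet l.1, Finset.mem_powerset.2
          (le_trans desSet_subset_range (by rw [hlen l.1 l.2.1 l.2.2.2]))⟩ :
            (Finset.range (n-1)).powerset))).symm.trans
      (Equiv.sigmaCongrRight (fun T => ?_))
    exact ⟨fun x => ⟨x.1.1, x.1.2.1, x.1.2.2.1, congrArg Subtype.val x.2, x.1.2.2.2⟩,
      fun l => ⟨⟨l.1, l.2.1, l.2.2.1, l.2.2.2.2⟩, Subtype.ext l.2.2.2.1⟩,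
      fun x => rfl, fun l => rfl⟩
  rw [Nat.card_congr e1, natCard_sigma,
    ← Finset.sum_coe_sort ((Finset.range (n-1)).powerset)
      (fun T => if AdmP k n T then cE m d T else 0)]
  apply Finset.sum_congr rfl
  intro T _
  by_cases hA : AdmP k n T.1
  · rw [if_pos hA, cE]
    apply Nat.card_congr (Equiv.subtypeEquivRight _)
    intro l
    constructor
    · rintro ⟨h1, _, h3, h4⟩; exact ⟨h1, h3, h4⟩
    · rintro ⟨h1, h3, h4⟩
      exact ⟨h1, (adm_iff (hlen l h1 h4)).2 (h3 ▸ hA), h3, h4⟩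
  · rw [if_neg hA]
    have : IsEmpty {l : List ℕ // Vld m l ∧ Admissible k l ∧ DesSet l = T.1 ∧ Cnt m d l} :=
      ⟨fun l => hA (l.2.2.2.1 ▸ (adm_iff (hlen l.1 l.2.1 l.2.2.2.2)).1 l.2.2.1)⟩
    exact Nat.card_of_isEmpty

end AdmAux

/-- `F_{m,k}` is a symmetric power series: it is invariant under every permutation of
the variables `x_1,…,x_m` (its coefficients satisfy
`coeff (d ∘ σ) F = coeff d F` for every permutation `σ`). -/
theorem admissible_gen_fun_symmetric (m k : ℕ) (hk : 2 ≤ k) (hkm : k ≤ m)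
    (σ : Equiv.Perm (Fin m)) (d : Fin m →₀ ℕ) :
    admGenFun m k (Finsupp.equivMapDomain σ d) = admGenFun m k d := by
  classical
  have key : Nat.card {l : List ℕ // AdmAux.Vld m l ∧ Admissible k l ∧
        AdmAux.Cnt m (Finsupp.equivMapDomain σ d) l}
      = Nat.card {l : List ℕ // AdmAux.Vld m l ∧ Admissible k l ∧ AdmAux.Cnt m d l} := by
    set n := ∑ i : Fin m, d i with hn
    have hn' : ∑ i : Fin m, (Finsupp.equivMapDomain σ d) i = n := by
      rw [hn]; simp only [Finsupp.equivMapDomain_apply]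
      exact Equiv.sum_comp σ.symm (fun j => d j)
    rw [AdmAux.final_count _ n hn' k, AdmAux.final_count d n rfl k]
    refine Finset.sum_congr rfl (fun T _ => ?_)
    by_cases hA : AdmAux.AdmP k n T
    · rw [if_pos hA, if_pos hA, AdmAux.cE_perm]
    · rw [if_neg hA, if_neg hA]
  show ((Nat.card _ : ℕ) : ℤ) = ((Nat.card _ : ℕ) : ℤ)
  exact_mod_cast key
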